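/- Let G = (V,E) be a tree (a connected acyclic finite simple graph) and let 𝒵 be a zone partition of V in which every zone is connected. Then for every simple path W in G (a path without repeated vertices), the multiple-counting and single-counting zone functions coincide: σ_M(W) = σ_S(W). Consequently, for every instance of the zone tariff design problem on a tree in which each fixed path W_d is the unique simple path between its endpoints, the optimal values of the connected-zones variants coincide: z*_MC = z*_SC. -/

import Mathlib

open scoped Classical
noncomputable section

/-- A zone partition of the vertex set `V`: nonempty, pairwise disjoint zones covering `V`. -/
def IsZonePartition {V : Type*} (Z : Finset (Finset V)) : Prop :=
  (∀ A ∈ Z, A.Nonempty) ∧ (∀ A ∈ Z, ∀ B ∈ Z, A ≠ B → Disjoint A B) ∧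
    ∀ v : V, ∃ A ∈ Z, v ∈ A

/-- `v` and `w` lie in a common zone of `Z`. -/
def SameZone {V : Type*} (Z : Finset (Finset V)) (v w : V) : Prop :=
  ∃ A ∈ Z, v ∈ A ∧ w ∈ A

/-- Multiple-counting zone function: one plus the number of zone borders crossed along `W`. -/
def sigmaM {V : Type*} (Z : Finset (Finset V)) (W : List V) : ℕ :=
  1 + ((W.zip W.tail).filter (fun p => decide (¬ SameZone Z p.1 p.2))).length

/-- Single-counting zone function: the number of distinct zones met by `W`. -/
def sigmaS {V : Type*} (Z : Finset (Finset V)) (W : List V) : ℕ :=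
  (Z.filter (fun A => ∃ v ∈ W, v ∈ A)).card

/-- A zone is connected if the induced subgraph is connected. -/
def ZoneConnected {V : Type*} (G : SimpleGraph V) (A : Finset V) : Prop :=
  (G.induce (A : Set V)).Connected

/-- Objective value of the zone tariff design problem. -/
def zoneObj {V ι : Type*} (D : Finset ι) (r : ι → ℝ) (t : ι → ℕ) (Wd : ι → List V)
    (σ : Finset (Finset V) → List V → ℕ) (Z : Finset (Finset V)) (P : ℕ → ℝ) : ℝ :=
  ∑ d ∈ D, (t d : ℝ) * |r d - P (σ Z (Wd d))|

/-- Optimal (infimum) objective value over all feasible zone partitions and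
nonnegative price functions. -/
def zStar {V ι : Type*} (D : Finset ι) (r : ι → ℝ) (t : ι → ℕ) (Wd : ι → List V)
    (σ : Finset (Finset V) → List V → ℕ) (feas : Finset (Finset V) → Prop) : ℝ :=
  sInf {x : ℝ | ∃ Z P, feas Z ∧ (∀ k, 0 ≤ P k) ∧ x = zoneObj D r t Wd σ Z P}

/-! ### Auxiliary material -/

namespace ZoneAux

variable {α : Type*}

/-- Equal values appear contiguously in `L`. -/
def Contig (L : List α) : Prop :=
  ∀ (x : α) (p q r : List α), L = p ++ x :: (q ++ x :: r) → ∀ y ∈ q, y = x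

lemma contig_tail {a : α} {L : List α} (h : Contig (a :: L)) : Contig L := by
  intro x p q r hL y hy
  exact h x (a :: p) q r (by simp [hL]) y hy

lemma runs_count [DecidableEq α] :
    ∀ (L : List α), L ≠ [] → Contig L →
      1 + ((L.zip L.tail).filter (fun q => decide (q.1 ≠ q.2))).length = L.toFinset.card
  | [], h, _ => absurd rfl h
  | [a], _, _ => by simp
  | a :: b :: M, _, hc => by
    have ih := runs_count (b :: M) (by simp) (contig_tail hc)
    by_cases hab : a = b
    · subst hab
      have hzip : (a :: a :: M).zip (a :: a :: M).tail = (a, a) :: ((a :: M).zip M) := by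
        simp
      rw [hzip]
      have : ((a, a) :: ((a :: M).zip M)).filter (fun q => decide (q.1 ≠ q.2))
          = ((a :: M).zip M).filter (fun q => decide (q.1 ≠ q.2)) := by
        simp [List.filter]
      rw [this]
      have htf : (a :: a :: M).toFinset = (a :: M).toFinset := by
        simp
      rw [htf, ← ih]
      rfl
    · have haM : a ∉ M := by
        intro hmem
        obtain ⟨s, t, hst⟩ := List.append_of_mem hmem
        exact hab ((hc a [] (b :: s) t (by simp [hst]) b (by simp)).symm)
      have hzip : (a :: b :: M).zip (a :: b :: M).tail = (a, b) :: ((b :: M).zip M) := by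
        simp
      rw [hzip]
      have hfil : ((a, b) :: ((b :: M).zip M)).filter (fun q => decide (q.1 ≠ q.2))
          = (a, b) :: (((b :: M).zip M).filter (fun q => decide (q.1 ≠ q.2))) := by
        simp [List.filter, hab]
      rw [hfil]
      have hnot : a ∉ (b :: M).toFinset := by
        simp [hab, haM]
      have htf : (a :: b :: M).toFinset = insert a (b :: M).toFinset := by
        simp
      rw [htf, Finset.card_insert_of_notMem hnot]
      have : ((b :: M).zip (b :: M).tail) = ((b :: M).zip M) := rfl
      rw [this] at ih
      simp only [List.length_cons]
      omega

end ZoneAux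

/-- Build a walk from a chain of adjacencies. -/
lemma walk_of_chain {V : Type*} (G : SimpleGraph V) :
    ∀ (l : List V) (u v : V), List.Chain G.Adj u (l ++ [v]) →
      ∃ p : G.Walk u v, p.support = u :: (l ++ [v])
  | [], u, v, h => by
    have hadj : G.Adj u v := (List.chain_cons.mp h).1
    exact ⟨SimpleGraph.Walk.cons hadj SimpleGraph.Walk.nil, by simp⟩
  | a :: l, u, v, h => by
    rw [List.cons_append] at h
    replace h := List.chain_cons.mp h
    obtain ⟨p, hp⟩ := walk_of_chain G l a v h.2
    exact ⟨SimpleGraph.Walk.cons h.1 p, by simp [hp]⟩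

/-- In a tree, the (unique) simple path between two vertices of a connected zone
stays inside the zone. -/
lemma path_subset_zone {V : Type*} (G : SimpleGraph V) (hG : G.IsTree) (A : Finset V)
    (hA : ZoneConnected G A) {u w : V} (hu : u ∈ A) (hw : w ∈ A)
    (p : G.Walk u w) (hp : p.IsPath) : ∀ y ∈ p.support, y ∈ A := by
  obtain ⟨q⟩ := hA.preconnected ⟨u, by simpa using hu⟩ ⟨w, by simpa using hw⟩
  let emb := SimpleGraph.Embedding.induce (G := G) ((A : Finset V) : Set V)
  let q' : G.Walk u w := q.map emb.toHom
  have hsub : ∀ y ∈ q'.support, y ∈ A := by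
    intro y hy
    change y ∈ (q.map emb.toHom).support at hy
    rw [SimpleGraph.Walk.support_map] at hy
    obtain ⟨⟨z, hz⟩, _, rfl⟩ := List.mem_map.mp hy
    exact (by simpa using hz : z ∈ A)
  have huniq := hG.existsUnique_path u w
  have hpq : p = q'.bypass := huniq.unique hp q'.bypass_isPath
  intro y hy
  exact hsub y (q'.support_bypass_subset (hpq ▸ hy))

/-- The zone containing a vertex. -/
def zoneOf {V : Type*} (Z : Finset (Finset V)) (hZ : IsZonePartition Z) (v : V) : Finset V :=
  (hZ.2.2 v).choose

lemma zoneOf_mem {V : Type*} (Z : Finset (Finset V)) (hZ : IsZonePartition Z) (v : V) :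
    zoneOf Z hZ v ∈ Z := (hZ.2.2 v).choose_spec.1

lemma mem_zoneOf {V : Type*} (Z : Finset (Finset V)) (hZ : IsZonePartition Z) (v : V) :
    v ∈ zoneOf Z hZ v := (hZ.2.2 v).choose_spec.2

lemma zoneOf_eq_of_mem {V : Type*} (Z : Finset (Finset V)) (hZ : IsZonePartition Z)
    {A : Finset V} {v : V} (hA : A ∈ Z) (hv : v ∈ A) : zoneOf Z hZ v = A := by
  by_contra h
  exact Finset.disjoint_left.mp (hZ.2.1 _ (zoneOf_mem Z hZ v) A hA h) (mem_zoneOf Z hZ v) hv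

lemma sameZone_iff {V : Type*} (Z : Finset (Finset V)) (hZ : IsZonePartition Z) (v w : V) :
    SameZone Z v w ↔ zoneOf Z hZ v = zoneOf Z hZ w := by
  constructor
  · rintro ⟨A, hA, hv, hw⟩
    rw [zoneOf_eq_of_mem Z hZ hA hv, zoneOf_eq_of_mem Z hZ hA hw]
  · intro h
    exact ⟨zoneOf Z hZ v, zoneOf_mem Z hZ v, mem_zoneOf Z hZ v, h ▸ mem_zoneOf Z hZ w⟩

/-- The main lemma: on a tree with connected zones, `sigmaM = sigmaS` on simple paths. -/
lemma sigma_eq {V : Type*} (G : SimpleGraph V) (hG : G.IsTree)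
    (Z : Finset (Finset V)) (hZ : IsZonePartition Z)
    (hconn : ∀ A ∈ Z, ZoneConnected G A)
    (W : List V) (hc : W.Chain' G.Adj) (hn : W.Nodup) (hne : W ≠ []) :
    sigmaM Z W = sigmaS Z W := by
  set f := zoneOf Z hZ with hf
  set L := W.map f with hL
  have h1 : sigmaM Z W
      = 1 + ((L.zip L.tail).filter (fun q => decide (q.1 ≠ q.2))).length := by
    rw [sigmaM]
    congr 1
    rw [hL, ← List.map_tail, List.zip_map, List.filter_map, List.length_map]
    apply congrArg List.length
    apply List.filter_congr
    intro p _
    simp only [Function.comp_apply, Prod.map_apply, decide_eq_decide]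
    rw [sameZone_iff Z hZ]
    tauto
  have h2 : sigmaS Z W = L.toFinset.card := by
    rw [sigmaS]
    congr 1
    ext A
    simp only [Finset.mem_filter, List.mem_toFinset, hL, List.mem_map]
    constructor
    · rintro ⟨hAZ, v, hvW, hvA⟩
      exact ⟨v, hvW, zoneOf_eq_of_mem Z hZ hAZ hvA⟩
    · rintro ⟨v, hvW, rfl⟩
      exact ⟨zoneOf_mem Z hZ v, v, hvW, mem_zoneOf Z hZ v⟩
  have h3 : ZoneAux.Contig L := by
    intro x p q r hdec y hy
    rw [hL] at hdec
    obtain ⟨p', rest, hW1, hp', hrest⟩ := List.map_eq_append_iff.mp hdec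
    cases rest with
    | nil => simp at hrest
    | cons u rest1 =>
      simp only [List.map_cons, List.cons.injEq] at hrest
      obtain ⟨hu_x, hrest1⟩ := hrest
      obtain ⟨q', rest2, hW2, hq', hrest2⟩ := List.map_eq_append_iff.mp hrest1
      cases rest2 with
      | nil => simp at hrest2
      | cons u' rest3 =>
        simp only [List.map_cons, List.cons.injEq] at hrest2
        obtain ⟨hu'_x, _⟩ := hrest2
        -- W = p' ++ u :: q' ++ u' :: rest3
        have hWdec : W = p' ++ (u :: (q' ++ [u'])) ++ rest3 := by
          rw [hW1, hW2]; simp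
        have hinf : (u :: (q' ++ [u'])) <:+: W := ⟨p', rest3, hWdec.symm⟩
        have hchain' : List.Chain' G.Adj (u :: (q' ++ [u'])) := hc.infix hinf
        have hchain : List.Chain G.Adj u (q' ++ [u']) := hchain'
        obtain ⟨pw, hsup⟩ := walk_of_chain G q' u u' hchain
        have hpath : pw.IsPath := by
          rw [SimpleGraph.Walk.isPath_def, hsup]
          exact hn.sublist hinf.sublist
        have hAZ : f u ∈ Z := zoneOf_mem Z hZ u
        have hconnA : ZoneConnected G (f u) := hconn _ hAZ
        have huA : u ∈ f u := mem_zoneOf Z hZ u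
        have hu'A : u' ∈ f u := by
          have : f u' = f u := by rw [hu'_x, hu_x]
          exact this ▸ mem_zoneOf Z hZ u'
        obtain ⟨y', hy'q, rfl⟩ := List.mem_map.mp (hq' ▸ hy)
        have hy'sup : y' ∈ pw.support := by
          rw [hsup]; simp [hy'q]
        have hy'A : y' ∈ f u :=
          path_subset_zone G hG (f u) hconnA huA hu'A pw hpath y' hy'sup
        rw [← hu_x]
        exact zoneOf_eq_of_mem Z hZ hAZ hy'A
  rw [h1, h2]
  exact ZoneAux.runs_count L (by simpa [hL] using hne) h3

/-- On a tree with connected zones, the multiple-counting and single-counting zone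
functions coincide on simple paths; consequently, for instances whose fixed paths are
the unique simple paths, the optimal values of the connected-zones variants with multiple
and single counting coincide. -/
theorem tree_connected_zones_MC_eq_SC {V ι : Type*} [Fintype V] [Nonempty V]
    (G : SimpleGraph V) (hG : G.IsTree)
    (D : Finset ι) (r : ι → ℝ) (t : ι → ℕ) (Wd : ι → List V)
    (hr : ∀ d ∈ D, 0 ≤ r d) (ht : ∀ d ∈ D, 1 ≤ t d)
    (hW : ∀ d ∈ D, (Wd d).Chain' G.Adj ∧ (Wd d).Nodup ∧ Wd d ≠ [])
    (N : ℕ) (hN : 1 ≤ N) :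
    (∀ Z : Finset (Finset V), IsZonePartition Z → (∀ A ∈ Z, ZoneConnected G A) →
      ∀ W : List V, W.Chain' G.Adj → W.Nodup → W ≠ [] → sigmaM Z W = sigmaS Z W) ∧
      zStar D r t Wd sigmaM
          (fun Z => IsZonePartition Z ∧ Z.card ≤ N ∧ ∀ A ∈ Z, ZoneConnected G A) =
        zStar D r t Wd sigmaS
          (fun Z => IsZonePartition Z ∧ Z.card ≤ N ∧ ∀ A ∈ Z, ZoneConnected G A) := by
  have key : ∀ Z : Finset (Finset V), IsZonePartition Z → (∀ A ∈ Z, ZoneConnected G A) →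
      ∀ W : List V, W.Chain' G.Adj → W.Nodup → W ≠ [] → sigmaM Z W = sigmaS Z W :=
    fun Z hZ hconn W hc hn hne => sigma_eq G hG Z hZ hconn W hc hn hne
  refine ⟨key, ?_⟩
  unfold zStar
  congr 1
  ext x
  simp only [Set.mem_setOf_eq]
  have hobj : ∀ Z P, IsZonePartition Z → (∀ A ∈ Z, ZoneConnected G A) →
      zoneObj D r t Wd sigmaM Z P = zoneObj D r t Wd sigmaS Z P := by
    intro Z P hZ hconn
    unfold zoneObj
    refine Finset.sum_congr rfl fun d hd => ?_
    rw [key Z hZ hconn (Wd d) (hW d hd).1 (hW d hd).2.1 (hW d hd).2.2]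
  constructor
  · rintro ⟨Z, P, ⟨h1, h2, h3⟩, hP, rfl⟩
    exact ⟨Z, P, ⟨h1, h2, h3⟩, hP, hobj Z P h1 h3⟩
  · rintro ⟨Z, P, ⟨h1, h2, h3⟩, hP, rfl⟩
    exact ⟨Z, P, ⟨h1, h2, h3⟩, hP, (hobj Z P h1 h3).symm⟩

end
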